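/- arXiv:math/0209320 — 3 statements merged into one kernel-verified Lean document; each statement's English description precedes it below -/
import Mathlib

section
/- Let X and Y be Banach spaces and A : X → Y a continuous mapping that is Fréchet differentiable in a neighbourhood of x₀ ∈ X. Assume DA(x₀) has a bounded right inverse B(x₀) with norm ω₁ > 0, that DA satisfies the Lipschitz condition ‖DA(x₁) − DA(x₂)‖ ≤ ω₂‖x₁ − x₂‖ for x₁, x₂ in a neighbourhood of x₀, and that ω₃ > 0 satisfies 4ω₁(ω₁+1)(ω₂+1)ω₃ < 1. Then for every y ∈ Y with ‖A(x₀) − y‖ < ω₃ there exists x ∈ X with A(x) = y. -/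
/-- **Begehr–Efendiev Newton-type solvability theorem.**
If `A : X → Y` is continuous, Fréchet differentiable near `x₀` with derivative `DA`,
`DA x₀` has a bounded right inverse `B` of norm `ω₁ > 0`, `DA` is Lipschitz with
constant `ω₂` near `x₀`, and `4ω₁(ω₁+1)(ω₂+1)ω₃ < 1`, then every `y` with
`‖A x₀ - y‖ < ω₃` is attained by `A`. -/
theorem stmt0 {X Y : Type*} [NormedAddCommGroup X] [NormedSpace ℝ X] [CompleteSpace X]
    [NormedAddCommGroup Y] [NormedSpace ℝ Y] [CompleteSpace Y]
    (A : X → Y) (hAcont : Continuous A) (x₀ : X) (DA : X → X →L[ℝ] Y)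
    (hdiff : ∀ x ∈ Metric.ball x₀ 1, HasFDerivAt A (DA x) x)
    (B : Y →L[ℝ] X) (hright : (DA x₀).comp B = ContinuousLinearMap.id ℝ Y)
    (ω₁ ω₂ ω₃ : ℝ) (hω₁ : 0 < ω₁) (hBnorm : ‖B‖ = ω₁) (hω₂ : 0 < ω₂)
    (hLip : ∀ x₁ ∈ Metric.ball x₀ 1, ∀ x₂ ∈ Metric.ball x₀ 1,
      ‖DA x₁ - DA x₂‖ ≤ ω₂ * ‖x₁ - x₂‖)
    (hω₃ : 0 < ω₃) (hsmall : 4 * ω₁ * (ω₁ + 1) * (ω₂ + 1) * ω₃ < 1) :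
    ∀ y : Y, ‖A x₀ - y‖ < ω₃ → ∃ x : X, A x = y := by
  intro y hy
  set ε := ‖A x₀ - y‖ with hεdef
  have hε0 : 0 ≤ ε := norm_nonneg _
  set r := 2 * ω₁ * ε with hrdef
  have hr0 : 0 ≤ r := by positivity
  have p0 : 0 < ω₁ * ω₃ := by positivity
  have p1 : 0 < ω₁ * ω₁ * ω₂ * ω₃ := by positivity
  have p2 : 0 < ω₁ * ω₁ * ω₃ := by positivity
  have p3 : 0 < ω₁ * ω₂ * ω₃ := by positivity
  have h41 : 4 * ω₁ * ω₃ < 1 := by nlinarith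
  have hr1 : r < 1 / 2 := by
    have : ω₁ * ε ≤ ω₁ * ω₃ := mul_le_mul_of_nonneg_left hy.le hω₁.le
    rw [hrdef]; nlinarith
  have hK : 2 * ω₁ ^ 2 * ω₂ * ε ≤ 1 / 2 := by
    have hq : ω₁ * ω₁ * ω₂ * ε ≤ ω₁ * ω₁ * ω₂ * ω₃ :=
      mul_le_mul_of_nonneg_left hy.le (by positivity)
    nlinarith
  set S := Metric.closedBall x₀ r with hSdef
  have hS1 : S ⊆ Metric.ball x₀ 1 := fun z hz => by
    rw [Metric.mem_ball]
    exact lt_of_le_of_lt (Metric.mem_closedBall.mp hz) (by linarith)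
  -- the Newton iteration
  let f : ℕ → X := fun n => Nat.rec x₀ (fun _ xn => xn - B (A xn - y)) n
  have hf0 : f 0 = x₀ := rfl
  have hfs : ∀ n, f (n + 1) = f n - B (A (f n) - y) := fun _ => rfl
  have hB : ∀ z : Y, DA x₀ (B z) = z := fun z => by
    have := congrArg (fun T : Y →L[ℝ] Y => T z) hright
    simpa using this
  -- main induction
  have key : ∀ n, ‖A (f n) - y‖ ≤ ε * (1 / 2) ^ n ∧
      ‖f n - x₀‖ ≤ 2 * ω₁ * ε * (1 - (1 / 2) ^ n) := by
    intro n
    induction n with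
    | zero => simp [hf0, hεdef]
    | succ n ih =>
      obtain ⟨he, hx⟩ := ih
      have hstep : ‖f (n + 1) - f n‖ ≤ ω₁ * (ε * (1 / 2) ^ n) := by
        rw [hfs]
        have : f n - B (A (f n) - y) - f n = -(B (A (f n) - y)) := by abel
        rw [this, norm_neg]
        calc ‖B (A (f n) - y)‖ ≤ ‖B‖ * ‖A (f n) - y‖ := B.le_opNorm _
          _ ≤ ω₁ * (ε * (1 / 2) ^ n) := by
              rw [hBnorm]; exact mul_le_mul_of_nonneg_left he hω₁.le
      have hpow : (0:ℝ) ≤ (1 / 2) ^ n := by positivity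
      have hxn1 : ‖f (n + 1) - x₀‖ ≤ 2 * ω₁ * ε * (1 - (1 / 2) ^ (n + 1)) := by
        calc ‖f (n + 1) - x₀‖ ≤ ‖f (n + 1) - f n‖ + ‖f n - x₀‖ :=
              norm_sub_le_norm_sub_add_norm_sub _ _ _
          _ ≤ ω₁ * (ε * (1 / 2) ^ n) + 2 * ω₁ * ε * (1 - (1 / 2) ^ n) :=
              add_le_add hstep hx
          _ = 2 * ω₁ * ε * (1 - (1 / 2) ^ (n + 1)) := by ring
      have hmemn : f n ∈ S := by
        rw [hSdef, Metric.mem_closedBall, dist_eq_norm]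
        have hp : (0:ℝ) ≤ 2 * ω₁ * ε * (1 / 2) ^ n := by positivity
        exact hx.trans (by rw [hrdef]; nlinarith)
      have hmemn1 : f (n + 1) ∈ S := by
        rw [hSdef, Metric.mem_closedBall, dist_eq_norm]
        have hp : (0:ℝ) ≤ 2 * ω₁ * ε * (1 / 2) ^ (n + 1) := by positivity
        exact hxn1.trans (by rw [hrdef]; nlinarith)
      -- mean value inequality for g z = A z - DA x₀ z
      have hmvt : ‖(A (f (n + 1)) - DA x₀ (f (n + 1))) - (A (f n) - DA x₀ (f n))‖
          ≤ (ω₂ * r) * ‖f (n + 1) - f n‖ := by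
        refine Convex.norm_image_sub_le_of_norm_hasFDerivWithin_le
          (f := fun z => A z - DA x₀ z) (f' := fun z => DA z - DA x₀)
          (fun z hz => ((hdiff z (hS1 hz)).sub ((DA x₀).hasFDerivAt)).hasFDerivWithinAt)
          (fun z hz => ?_) (convex_closedBall _ _) hmemn hmemn1
        have h1 : ‖DA z - DA x₀‖ ≤ ω₂ * ‖z - x₀‖ :=
          hLip z (hS1 hz) x₀ (Metric.mem_ball_self one_pos)
        have h2 : ‖z - x₀‖ ≤ r := by
          rw [← dist_eq_norm]; exact Metric.mem_closedBall.mp hz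
        exact h1.trans (mul_le_mul_of_nonneg_left h2 hω₂.le)
      have hDA : DA x₀ (f (n + 1)) - DA x₀ (f n) = -(A (f n) - y) := by
        rw [← map_sub, hfs]
        have : f n - B (A (f n) - y) - f n = -(B (A (f n) - y)) := by abel
        rw [this, map_neg, hB]
      have hid : A (f (n + 1)) - y =
          (A (f (n + 1)) - DA x₀ (f (n + 1))) - (A (f n) - DA x₀ (f n)) := by
        have h3 : (A (f (n + 1)) - DA x₀ (f (n + 1))) - (A (f n) - DA x₀ (f n))
            = A (f (n + 1)) - A (f n) - (DA x₀ (f (n + 1)) - DA x₀ (f n)) := by abel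
        rw [h3, hDA]; abel
      refine ⟨?_, hxn1⟩
      calc ‖A (f (n + 1)) - y‖ ≤ (ω₂ * r) * ‖f (n + 1) - f n‖ := by rw [hid]; exact hmvt
        _ ≤ (ω₂ * r) * (ω₁ * (ε * (1 / 2) ^ n)) :=
            mul_le_mul_of_nonneg_left hstep (by positivity)
        _ ≤ ε * (1 / 2) ^ (n + 1) := by
            have hεp : (0:ℝ) ≤ ε * (1 / 2) ^ n := by positivity
            have := mul_le_mul_of_nonneg_right hK hεp
            calc (ω₂ * r) * (ω₁ * (ε * (1 / 2) ^ n))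
                = (2 * ω₁ ^ 2 * ω₂ * ε) * (ε * (1 / 2) ^ n) := by rw [hrdef]; ring
              _ ≤ (1 / 2) * (ε * (1 / 2) ^ n) := this
              _ = ε * (1 / 2) ^ (n + 1) := by ring
  -- Cauchy and limit
  have hcauchy : CauchySeq f := by
    refine cauchySeq_of_le_geometric (1 / 2) (ω₁ * ε) (by norm_num) fun n => ?_
    rw [dist_eq_norm']
    calc ‖f (n + 1) - f n‖ ≤ ω₁ * (ε * (1 / 2) ^ n) := by
          rw [hfs]
          have h4 : f n - B (A (f n) - y) - f n = -(B (A (f n) - y)) := by abel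
          rw [h4, norm_neg]
          calc ‖B (A (f n) - y)‖ ≤ ‖B‖ * ‖A (f n) - y‖ := B.le_opNorm _
            _ ≤ ω₁ * (ε * (1 / 2) ^ n) := by
                rw [hBnorm]; exact mul_le_mul_of_nonneg_left (key n).1 hω₁.le
      _ = ω₁ * ε * (1 / 2) ^ n := by ring
  obtain ⟨x, hx⟩ := cauchySeq_tendsto_of_complete hcauchy
  refine ⟨x, ?_⟩
  have h1 : Filter.Tendsto (fun n => A (f n)) Filter.atTop (nhds (A x)) :=
    (hAcont.tendsto x).comp hx
  have h2 : Filter.Tendsto (fun n => A (f n)) Filter.atTop (nhds y) := by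
    rw [tendsto_iff_norm_sub_tendsto_zero]
    have hgeo : Filter.Tendsto (fun n : ℕ => ε * (1 / 2) ^ n) Filter.atTop (nhds 0) := by
      simpa using (tendsto_pow_atTop_nhds_zero_of_lt_one (by norm_num : (0:ℝ) ≤ 1 / 2)
        (by norm_num : (1:ℝ) / 2 < 1)).const_mul ε
    exact squeeze_zero (fun n => norm_nonneg _) (fun n => (key n).1) hgeo
  exact tendsto_nhds_unique h1 h2
end

section
/- Let D be a bounded domain in ℂ with smooth boundary and let h₁, …, h_m be harmonic functions on D, continuous up to the boundary and C¹ up to the boundary, such that h_p = δ_{pj} on the boundary component Γ_j (j = 0,1,…,m, with Γ₀ the outer boundary, so each h_p vanishes on Γ₀). If λ₁, …, λ_m are real numbers such that the harmonic function h = Σ_{p=1}^m λ_p h_p has vanishing outward normal derivative ∂h/∂n everywhere on ∂D, then λ₁ = λ₂ = … = λ_m = 0. -/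
open Metric Set Complex Filter Topology

/-- Constancy of a C¹ function along a radial segment where its derivative vanishes. -/
private lemma aux_ray {H : ℂ → ℝ} (hH : ContDiff ℝ 1 H) {u : ℂ} {A B : ℝ}
    (hAB : A ≤ B) (hz : ∀ s ∈ Set.Icc A B, fderiv ℝ H (s • u) = 0) :
    H (B • u) = H (A • u) := by
  have hderiv : ∀ s ∈ Set.Ico A B, HasDerivWithinAt (fun s : ℝ => H (s • u)) 0 (Set.Ici s) s := by
    intro s hs
    have h1 : HasDerivAt (fun s : ℝ => s • u) ((1:ℝ) • u) s := (hasDerivAt_id s).smul_const u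
    have h2 := ((hH.differentiable one_ne_zero) (s • u)).hasFDerivAt.comp_hasDerivAt s h1
    rw [hz s ⟨hs.1, hs.2.le⟩] at h2
    simpa [Function.comp_def] using h2.hasDerivWithinAt
  have hcont : ContinuousOn (fun s : ℝ => H (s • u)) (Set.Icc A B) :=
    (hH.continuous.comp (continuous_id.smul continuous_const)).continuousOn
  exact (constant_of_has_deriv_right_zero hcont hderiv B (by simp [hAB]))

/-- A C¹ function constant on a circle with vanishing normal derivative at a point of the
circle has vanishing full gradient there. -/
private lemma aux_circle {H : ℂ → ℝ} (hH : ContDiff ℝ 1 H) (c : ℂ) (R κ : ℝ) (hR : 0 < R)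
    (hconst : ∀ w ∈ sphere c R, H w = κ) (z : ℂ) (hz : z ∈ sphere c R)
    (hnorm : fderiv ℝ H z (z - c) = 0) : fderiv ℝ H z = 0 := by
  have hzc : ‖z - c‖ = R := by
    simpa [Complex.dist_eq] using hz
  have hzc0 : z - c ≠ 0 := by
    intro h; rw [h] at hzc; simp at hzc; exact hR.ne' hzc.symm
  have htan : fderiv ℝ H z (Complex.I * (z - c)) = 0 := by
    set γ : ℝ → ℂ := fun t => c + Complex.exp (t * Complex.I) * (z - c) with hγ
    have hγ0 : γ 0 = z := by simp [hγ]
    have hγmem : ∀ t, γ t ∈ sphere c R := by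
      intro t
      simp only [hγ, mem_sphere_iff_norm, add_sub_cancel_left]
      rw [norm_mul, Complex.norm_exp_ofReal_mul_I, one_mul,
        ← mem_sphere_iff_norm]
      exact hz
    have hd1 : HasDerivAt (fun t : ℝ => (t : ℂ) * Complex.I) Complex.I 0 := by
      simpa using (hasDerivAt_id (0:ℝ)).ofReal_comp.mul_const Complex.I
    have hd2 : HasDerivAt γ (Complex.I * (z - c)) 0 := by
      have := (hd1.cexp.mul_const (z - c)).const_add c
      simpa [hγ] using this
    have hd3 : HasDerivAt (fun t => H (γ t)) (fderiv ℝ H (γ 0) (Complex.I * (z - c))) 0 :=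
      ((hH.differentiable one_ne_zero) (γ 0)).hasFDerivAt.comp_hasDerivAt 0 hd2
    rw [hγ0] at hd3
    have hconstγ : (fun t => H (γ t)) = fun _ => κ := funext fun t => hconst _ (hγmem t)
    have : HasDerivAt (fun t : ℝ => κ) (fderiv ℝ H z (Complex.I * (z - c))) 0 := hconstγ ▸ hd3
    simpa using this.unique (hasDerivAt_const 0 κ)
  ext v
  have hv : v = ((v / (z - c)).re : ℝ) • (z - c) + ((v / (z - c)).im : ℝ) • (Complex.I * (z - c)) := by
    rw [Complex.real_smul, Complex.real_smul]
    have h2 : (↑(v / (z - c)).re : ℂ) * (z - c) + (↑(v / (z - c)).im : ℂ) * (Complex.I * (z - c))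
        = (↑(v / (z - c)).re + ↑(v / (z - c)).im * Complex.I) * (z - c) := by ring
    rw [h2, Complex.re_add_im, div_mul_cancel₀ v hzc0]
  rw [hv, map_add, map_smul, map_smul, hnorm, htan]
  simp

/-- Cauchy–Riemann: the conjugate gradient of a harmonic function is complex differentiable. -/
private lemma aux_cr {H : ℂ → ℝ} {z : ℂ} (hH2 : ContDiffAt ℝ 2 H z)
    (hlap : fderiv ℝ (fderiv ℝ H) z 1 1 + fderiv ℝ (fderiv ℝ H) z Complex.I Complex.I = 0) :
    DifferentiableAt ℂ
      (fun w => (fderiv ℝ H w 1) • (1:ℂ) - (fderiv ℝ H w Complex.I) • Complex.I) z := by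
  set B := fderiv ℝ (fderiv ℝ H) z with hBdef
  have hB : HasFDerivAt (fderiv ℝ H) B z :=
    ((hH2.fderiv_right (m := 1) (by norm_num)).differentiableAt one_ne_zero).hasFDerivAt
  have hsymm : ∀ v w, B v w = B w v := hH2.isSymmSndFDerivAt (by simp)
  have h1 : HasFDerivAt (fun w => fderiv ℝ H w (1:ℂ))
      ((ContinuousLinearMap.apply ℝ ℝ (1:ℂ)).comp B) z :=
    (ContinuousLinearMap.apply ℝ ℝ (1:ℂ)).hasFDerivAt.comp z hB
  have h2 : HasFDerivAt (fun w => fderiv ℝ H w Complex.I)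
      ((ContinuousLinearMap.apply ℝ ℝ Complex.I).comp B) z :=
    (ContinuousLinearMap.apply ℝ ℝ Complex.I).hasFDerivAt.comp z hB
  have hL : HasFDerivAt (fun w => (fderiv ℝ H w 1) • (1:ℂ) - (fderiv ℝ H w Complex.I) • Complex.I)
      (((ContinuousLinearMap.apply ℝ ℝ (1:ℂ)).comp B).smulRight (1:ℂ)
        - ((ContinuousLinearMap.apply ℝ ℝ Complex.I).comp B).smulRight Complex.I) z :=
    (h1.smul_const (1:ℂ)).sub (h2.smul_const Complex.I)
  set c : ℂ := (B 1 1 : ℝ) • (1:ℂ) - (B 1 Complex.I : ℝ) • Complex.I with hc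
  have hres : (c • ContinuousLinearMap.id ℂ ℂ).restrictScalars ℝ
      = (((ContinuousLinearMap.apply ℝ ℝ (1:ℂ)).comp B).smulRight (1:ℂ)
        - ((ContinuousLinearMap.apply ℝ ℝ Complex.I).comp B).smulRight Complex.I) := by
    ext v
    have hv : v = (v.re : ℝ) • (1:ℂ) + (v.im : ℝ) • Complex.I := by
      simp [Complex.real_smul, Complex.re_add_im]
    simp only [ContinuousLinearMap.coe_restrictScalars', ContinuousLinearMap.smul_apply,
      ContinuousLinearMap.id_apply, ContinuousLinearMap.sub_apply,
      ContinuousLinearMap.smulRight_apply, ContinuousLinearMap.comp_apply,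
      ContinuousLinearMap.apply_apply, smul_eq_mul]
    rw [hv]
    rw [map_add, map_smul, map_smul]
    simp only [ContinuousLinearMap.add_apply, ContinuousLinearMap.smul_apply]
    have e1 : B Complex.I 1 = B 1 Complex.I := hsymm _ _
    have e2 : B Complex.I Complex.I = - B 1 1 := by linarith [hlap]
    rw [e1, e2, hc]
    simp only [Complex.real_smul, smul_eq_mul]
    push_cast
    linear_combination (-((((B 1) Complex.I : ℝ)) : ℂ) * (v.im : ℂ)) * Complex.I_sq
  exact (hasFDerivAt_of_restrictScalars ℝ hL hres).differentiableAt

/-- Laplacian of a linear combination. -/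
private lemma aux_lap {m : ℕ} {h : Fin m → ℂ → ℝ} {lam : Fin m → ℝ} {D : Set ℂ} (hDo : IsOpen D)
    (hC1 : ∀ p, ContDiff ℝ 1 (h p)) (h2 : ∀ p, ContDiffOn ℝ 2 (h p) D)
    (hlapp : ∀ p, ∀ z ∈ D, fderiv ℝ (fun w => fderiv ℝ (h p) w 1) z 1 +
      fderiv ℝ (fun w => fderiv ℝ (h p) w Complex.I) z Complex.I = 0)
    {z : ℂ} (hz : z ∈ D) :
    fderiv ℝ (fderiv ℝ (fun w => ∑ p, lam p * h p w)) z 1 1 +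
      fderiv ℝ (fderiv ℝ (fun w => ∑ p, lam p * h p w)) z Complex.I Complex.I = 0 := by
  have hmem : D ∈ nhds z := hDo.mem_nhds hz
  have hp2 : ∀ p, ContDiffAt ℝ 2 (h p) z := fun p => (h2 p).contDiffAt hmem
  have hfd : fderiv ℝ (fun w => ∑ p, lam p * h p w) = fun w => ∑ p, lam p • fderiv ℝ (h p) w := by
    funext w
    rw [fderiv_fun_sum (fun p _ => (((hC1 p).differentiable one_ne_zero) w).const_mul (lam p))]
    exact Finset.sum_congr rfl fun p _ =>
      fderiv_const_mul (((hC1 p).differentiable one_ne_zero) w) (lam p)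
  have hdp : ∀ p, DifferentiableAt ℝ (fun w => fderiv ℝ (h p) w) z := fun p =>
    ((hp2 p).fderiv_right (m := 1) (by norm_num)).differentiableAt one_ne_zero
  have hsum : HasFDerivAt (fun w => ∑ p, lam p • fderiv ℝ (h p) w)
      (∑ p, lam p • fderiv ℝ (fderiv ℝ (h p)) z) z := by
    apply HasFDerivAt.fun_sum
    intro p _
    exact ((hdp p).hasFDerivAt).const_smul (lam p)
  have hB : fderiv ℝ (fderiv ℝ (fun w => ∑ p, lam p * h p w)) z
      = ∑ p, lam p • fderiv ℝ (fderiv ℝ (h p)) z := by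
    rw [hfd]
    exact hsum.fderiv
  rw [hB]
  simp only [ContinuousLinearMap.sum_apply, ContinuousLinearMap.smul_apply, smul_eq_mul]
  rw [← Finset.sum_add_distrib]
  apply Finset.sum_eq_zero
  intro p _
  have key : ∀ v : ℂ, fderiv ℝ (fun w => fderiv ℝ (h p) w v) z
      = (fderiv ℝ (fderiv ℝ (h p)) z).flip v := by
    intro v
    rw [fderiv_clm_apply (hdp p) (differentiableAt_const v)]
    simp
  have hla := hlapp p z hz
  rw [key 1, key Complex.I] at hla
  simp only [ContinuousLinearMap.flip_apply] at hla
  rw [← mul_add, hla, mul_zero]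
private lemma aux_closure {m : ℕ} (a : Fin m → ℂ) (r : Fin m → ℝ)
    (hr : ∀ j, 0 < r j) (hin : ∀ j, ‖a j‖ + r j < 1)
    (hdisj : ∀ j t, j ≠ t → r j + r t < ‖a j - a t‖) :
    closedBall (0:ℂ) 1 \ ⋃ t, ball (a t) (r t) ⊆
      closure (ball (0:ℂ) 1 \ ⋃ t, closedBall (a t) (r t)) := by
  set D : Set ℂ := ball (0:ℂ) 1 \ ⋃ t, closedBall (a t) (r t) with hD
  intro x hx
  obtain ⟨hx1, hx2⟩ := hx
  simp only [mem_iUnion, not_exists, mem_ball_iff_norm, not_lt] at hx2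
  by_cases hxD : x ∈ D
  · exact subset_closure hxD
  -- not in D
  have hxcb : ‖x‖ ≤ 1 := by rwa [mem_closedBall_iff_norm, sub_zero] at hx1
  rcases eq_or_lt_of_le hxcb with hx1' | hx1'
  · -- on the unit circle; approximate by (1 - ε) • x
    have htt : Tendsto (fun ε : ℝ => x - ε • x) (𝓝[>] 0) (𝓝 x) := by
      have : Tendsto (fun ε : ℝ => x - ε • x) (𝓝 0) (𝓝 x) := by
        have hcc : Continuous (fun ε : ℝ => x - ε • x) := by continuity
        have := hcc.tendsto (0:ℝ)
        simpa using this
      exact this.mono_left nhdsWithin_le_nhds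
    refine mem_closure_of_tendsto htt ?_
    have hev : ∀ t : Fin m, ∀ᶠ ε : ℝ in 𝓝[>] 0, ¬ (x - ε • x) ∈ closedBall (a t) (r t) := by
      intro t
      have hδ : (0:ℝ) < 1 - ‖a t‖ - r t := by linarith [hin t]
      filter_upwards [Ioo_mem_nhdsGT hδ] with ε hε
      simp only [mem_closedBall_iff_norm, not_le]
      have h1 : ‖x - ε • x - a t‖ ≥ ‖x - ε • x‖ - ‖a t‖ := by
        have := norm_sub_norm_le (x - ε • x) (a t); linarith
      have h2 : ‖x - ε • x‖ = 1 - ε := by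
        have : x - ε • x = (1 - ε) • x := by module
        rw [this, norm_smul, hx1', mul_one, Real.norm_eq_abs,
          abs_of_pos (by linarith [hε.2, hin t, norm_nonneg (a t), (hr t).le])]
      have hε2 : ε < 1 - ‖a t‖ - r t := hε.2
      linarith
    have hball : ∀ᶠ ε : ℝ in 𝓝[>] 0, (x - ε • x) ∈ ball (0:ℂ) 1 := by
      filter_upwards [Ioo_mem_nhdsGT (zero_lt_one)] with ε hε
      rw [mem_ball_iff_norm, sub_zero]
      have : x - ε • x = (1 - ε) • x := by module
      rw [this, norm_smul, hx1', mul_one, Real.norm_eq_abs, abs_of_pos (by linarith [hε.2])]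
      linarith [hε.1]
    filter_upwards [hball, (eventually_all.mpr hev)] with ε h1 h2
    exact ⟨h1, by simpa only [mem_iUnion, not_exists] using h2⟩
  · -- strictly inside; must be on some inner sphere
    have : ¬ (∀ t, x ∉ closedBall (a t) (r t)) := by
      intro hall
      exact hxD ⟨by rwa [mem_ball_iff_norm, sub_zero], by simpa only [mem_iUnion, not_exists] using hall⟩
    push_neg at this
    obtain ⟨j, hj⟩ := this
    have hxsph : ‖x - a j‖ = r j := le_antisymm (by rwa [mem_closedBall_iff_norm] at hj) (hx2 j)
    -- approximate by x + ε • (x - a j)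
    have htt : Tendsto (fun ε : ℝ => x + ε • (x - a j)) (𝓝[>] 0) (𝓝 x) := by
      have : Tendsto (fun ε : ℝ => x + ε • (x - a j)) (𝓝 0) (𝓝 x) := by
        have hcc : Continuous (fun ε : ℝ => x + ε • (x - a j)) := by continuity
        have := hcc.tendsto (0:ℝ)
        simpa using this
      exact this.mono_left nhdsWithin_le_nhds
    refine mem_closure_of_tendsto htt ?_
    have hev : ∀ t : Fin m, ∀ᶠ ε : ℝ in 𝓝[>] 0, ¬ (x + ε • (x - a j)) ∈ closedBall (a t) (r t) := by
      intro t
      rcases eq_or_ne t j with rfl | hne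
      · filter_upwards [self_mem_nhdsWithin] with ε (hε : 0 < ε)
        simp only [mem_closedBall_iff_norm, not_le]
        have : x + ε • (x - a t) - a t = (1 + ε) • (x - a t) := by module
        rw [this, norm_smul, hxsph, Real.norm_eq_abs, abs_of_pos (by linarith)]
        nlinarith [hr t]
      · have hdist : r t < ‖x - a t‖ := by
          rcases lt_or_eq_of_le (hx2 t) with h | h
          · exact h
          · exfalso
            have h1 : ‖a j - a t‖ ≤ ‖x - a j‖ + ‖x - a t‖ := by
              calc ‖a j - a t‖ = ‖-(x - a j) + (x - a t)‖ := by ring_nf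
                _ ≤ ‖-(x - a j)‖ + ‖x - a t‖ := norm_add_le _ _
                _ = ‖x - a j‖ + ‖x - a t‖ := by rw [norm_neg]
            rw [hxsph, ← h] at h1
            linarith [hdisj j t hne.symm]
        have hδ : (0:ℝ) < (‖x - a t‖ - r t) / r j :=
          div_pos (by linarith) (hr j)
        filter_upwards [Ioo_mem_nhdsGT hδ] with ε hε
        simp only [mem_closedBall_iff_norm, not_le]
        have h1 : ‖x + ε • (x - a j) - a t‖ ≥ ‖x - a t‖ - ε * r j := by
          have h2 : ‖x - a t‖ ≤ ‖x + ε • (x - a j) - a t‖ + ‖ε • (x - a j)‖ := by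
            calc ‖x - a t‖ = ‖(x + ε • (x - a j) - a t) + (-(ε • (x - a j)))‖ := by ring_nf
              _ ≤ ‖x + ε • (x - a j) - a t‖ + ‖-(ε • (x - a j))‖ := norm_add_le _ _
              _ = ‖x + ε • (x - a j) - a t‖ + ‖ε • (x - a j)‖ := by rw [norm_neg]
          have h3 : ‖ε • (x - a j)‖ = ε * r j := by
            rw [norm_smul, hxsph, Real.norm_eq_abs, abs_of_pos hε.1]
          linarith
        have h4 : ε * r j < ‖x - a t‖ - r t := by
          have := hε.2
          have hrj := hr j
          calc ε * r j < ((‖x - a t‖ - r t) / r j) * r j := by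
                exact mul_lt_mul_of_pos_right this hrj
            _ = ‖x - a t‖ - r t := by field_simp
        linarith
    have hball : ∀ᶠ ε : ℝ in 𝓝[>] 0, (x + ε • (x - a j)) ∈ ball (0:ℂ) 1 := by
      have hδ : (0:ℝ) < (1 - ‖x‖) / r j := div_pos (by linarith) (hr j)
      filter_upwards [Ioo_mem_nhdsGT hδ] with ε hε
      rw [mem_ball_iff_norm, sub_zero]
      have h1 : ‖x + ε • (x - a j)‖ ≤ ‖x‖ + ε * r j := by
        calc ‖x + ε • (x - a j)‖ ≤ ‖x‖ + ‖ε • (x - a j)‖ := norm_add_le _ _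
          _ = ‖x‖ + ε * r j := by rw [norm_smul, hxsph, Real.norm_eq_abs, abs_of_pos hε.1]
      have h4 : ε * r j < 1 - ‖x‖ := by
        have := hε.2
        have hrj := hr j
        calc ε * r j < ((1 - ‖x‖) / r j) * r j := mul_lt_mul_of_pos_right this hrj
          _ = 1 - ‖x‖ := by field_simp
      linarith
    filter_upwards [hball, (eventually_all.mpr hev)] with ε h1 h2
    exact ⟨h1, by simpa only [mem_iUnion, not_exists] using h2⟩




/-- `h` is harmonic on `s`: twice continuously differentiable with vanishing Laplacian. -/
def IsHarmonicOn (h : ℂ → ℝ) (s : Set ℂ) : Prop :=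
  ContDiffOn ℝ 2 h s ∧
    ∀ z ∈ s, fderiv ℝ (fun w => fderiv ℝ h w 1) z 1 +
      fderiv ℝ (fun w => fderiv ℝ h w Complex.I) z Complex.I = 0

/-- If the harmonic measures `h p` of the inner boundary circles of the circular domain
`D = Δ \ ⋃ closedBall (a j) (r j)` (harmonic on `D`, `C¹` up to the boundary, equal to
`δ_{pj}` on the boundary circles and `0` on the outer circle) combine to a harmonic
function `h = Σ λ_p h_p` whose normal derivative vanishes on all of `∂D`, then all
`λ_p = 0`. -/
theorem stmt5 (m : ℕ) (a : Fin m → ℂ) (r : Fin m → ℝ)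
    (hr : ∀ j, 0 < r j) (hin : ∀ j, ‖a j‖ + r j < 1)
    (hdisj : ∀ j t, j ≠ t → r j + r t < ‖a j - a t‖)
    (D : Set ℂ) (hD : D = Metric.ball 0 1 \ ⋃ j, Metric.closedBall (a j) (r j))
    (h : Fin m → ℂ → ℝ)
    (hC1 : ∀ p, ContDiff ℝ 1 (h p))
    (hcont : ∀ p, ContinuousOn (h p) (closure D))
    (hharm : ∀ p, IsHarmonicOn (h p) D)
    (hbd1 : ∀ p, ∀ z ∈ Metric.sphere (a p) (r p), h p z = 1)
    (hbd0 : ∀ p j, p ≠ j → ∀ z ∈ Metric.sphere (a j) (r j), h p z = 0)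
    (hbdout : ∀ p, ∀ z ∈ Metric.sphere (0 : ℂ) 1, h p z = 0)
    (lam : Fin m → ℝ)
    (hnormal_out : ∀ z ∈ Metric.sphere (0 : ℂ) 1,
      fderiv ℝ (fun w => ∑ p, lam p * h p w) z z = 0)
    (hnormal_in : ∀ j, ∀ z ∈ Metric.sphere (a j) (r j),
      fderiv ℝ (fun w => ∑ p, lam p * h p w) z (z - a j) = 0) :
    ∀ p, lam p = 0 := by
  subst hD
  set D : Set ℂ := Metric.ball 0 1 \ ⋃ j, Metric.closedBall (a j) (r j) with hDdef
  set H : ℂ → ℝ := fun w => ∑ p, lam p * h p w with hHdef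
  set S : Set ℂ := Metric.closedBall 0 1 \ ⋃ j, Metric.ball (a j) (r j) with hSdef
  -- normalize abs to norm
  have hin' : ∀ j, ‖a j‖ + r j < 1 := by simpa using hin
  have hdisj' : ∀ j t, j ≠ t → r j + r t < ‖a j - a t‖ := by
    simpa using hdisj
  have hDo : IsOpen D := by
    rw [hDdef]
    exact Metric.isOpen_ball.sdiff (isClosed_iUnion_of_finite fun j => Metric.isClosed_closedBall)
  have hHC1 : ContDiff ℝ 1 H := by
    rw [hHdef]
    exact ContDiff.sum fun p _ => contDiff_const.mul (hC1 p)
  -- spheres inside S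
  have hsub1 : ∀ j, Metric.sphere (a j) (r j) ⊆ S := by
    intro j z hz
    rw [Metric.mem_sphere, Complex.dist_eq] at hz
    constructor
    · rw [Metric.mem_closedBall, Complex.dist_eq, sub_zero]
      calc ‖z‖ = ‖a j + (z - a j)‖ := by ring_nf
        _ ≤ ‖a j‖ + ‖z - a j‖ := norm_add_le _ _
        _ = ‖a j‖ + r j := by rw [hz]
        _ ≤ 1 := (hin' j).le
    · simp only [Set.mem_iUnion, not_exists, Metric.mem_ball, Complex.dist_eq,
        not_lt]
      intro t
      rcases eq_or_ne j t with rfl | hne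
      · rw [hz]
      · have h1 : ‖a j - a t‖ ≤ ‖z - a j‖ + ‖z - a t‖ := by
          calc ‖a j - a t‖ = ‖-(z - a j) + (z - a t)‖ := by ring_nf
            _ ≤ ‖-(z - a j)‖ + ‖z - a t‖ := norm_add_le _ _
            _ = ‖z - a j‖ + ‖z - a t‖ := by rw [norm_neg]
        have := hdisj' j t hne
        rw [hz] at h1
        linarith
  have hsub0 : Metric.sphere (0:ℂ) 1 ⊆ S := by
    intro z hz
    rw [Metric.mem_sphere, Complex.dist_eq, sub_zero] at hz
    constructor
    · rw [Metric.mem_closedBall, Complex.dist_eq, sub_zero, hz]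
    · simp only [Set.mem_iUnion, not_exists, Metric.mem_ball, Complex.dist_eq,
        not_lt]
      intro t
      have h1 : ‖z‖ - ‖a t‖ ≤ ‖z - a t‖ := by
        have := norm_sub_norm_le z (a t); linarith
      have := hin' t
      linarith [hz ▸ h1]
  -- S is closed and D ⊆ S
  have hSclosed : IsClosed S := by
    rw [hSdef]
    exact Metric.isClosed_closedBall.sdiff (isOpen_iUnion fun j => Metric.isOpen_ball)
  have hDS : D ⊆ S := by
    intro x hx
    refine ⟨Metric.ball_subset_closedBall hx.1, fun hmem => ?_⟩
    obtain ⟨t, ht⟩ := Set.mem_iUnion.mp hmem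
    exact hx.2 (Set.mem_iUnion.mpr ⟨t, Metric.ball_subset_closedBall ht⟩)
  have hclosDS : closure D ⊆ S := hSclosed.closure_subset_iff.mpr hDS
  -- values of H on the boundary circles
  have hHsph : ∀ j, ∀ z ∈ Metric.sphere (a j) (r j), H z = lam j := by
    intro j z hz
    have hb : H z = ∑ p, lam p * h p z := rfl
    rw [hb, Finset.sum_eq_single j]
    · rw [hbd1 j z hz, mul_one]
    · intro p _ hp
      rw [hbd0 p j hp z hz, mul_zero]
    · intro hj; exact absurd (Finset.mem_univ j) hj
  have hHout : ∀ z ∈ Metric.sphere (0:ℂ) 1, H z = 0 := by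
    intro z hz
    have hb : H z = ∑ p, lam p * h p z := rfl
    rw [hb]
    exact Finset.sum_eq_zero fun p _ => by rw [hbdout p z hz, mul_zero]
  -- gradient of H vanishes on all boundary circles
  have hgradb : ∀ x, (x ∈ Metric.sphere (0:ℂ) 1 ∨ ∃ j, x ∈ Metric.sphere (a j) (r j)) →
      fderiv ℝ H x = 0 := by
    rintro x (hx | ⟨j, hx⟩)
    · refine aux_circle hHC1 0 1 0 one_pos hHout x hx ?_
      rw [sub_zero]
      exact hnormal_out x hx
    · exact aux_circle hHC1 (a j) (r j) (lam j) (hr j) (hHsph j) x hx (hnormal_in j x hx)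
  -- the conjugate gradient
  set f : ℂ → ℂ := fun w => (fderiv ℝ H w 1) • (1:ℂ) - (fderiv ℝ H w Complex.I) • Complex.I
    with hfdef
  have hfcont : Continuous f := by
    have hdH : Continuous (fderiv ℝ H) := (hHC1.fderiv_right (m := 0) (by norm_num)).continuous
    rw [hfdef]
    exact (((ContinuousLinearMap.apply ℝ ℝ (1:ℂ)).continuous.comp hdH).smul continuous_const).sub
      (((ContinuousLinearMap.apply ℝ ℝ Complex.I).continuous.comp hdH).smul continuous_const)
  have hfdiff : DifferentiableOn ℂ f D := by
    intro z hz
    have hH2 : ContDiffAt ℝ 2 H z := by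
      rw [hHdef]
      exact ContDiffAt.sum fun p _ =>
        contDiffAt_const.mul ((hharm p).1.contDiffAt (hDo.mem_nhds hz))
    have hlapH := aux_lap (lam := lam) hDo hC1 (fun p => (hharm p).1) (fun p => (hharm p).2) hz
    exact (aux_cr hH2 hlapH).differentiableWithinAt
  -- boundary values of f vanish
  have hfront : ∀ x ∈ frontier D, f x = 0 := by
    intro x hx
    rw [frontier_eq_closure_inter_closure, hDo.isClosed_compl.closure_eq] at hx
    have hxS : x ∈ S := hclosDS hx.1
    have hxD : x ∉ D := hx.2
    have hcase : x ∈ Metric.sphere (0:ℂ) 1 ∨ ∃ j, x ∈ Metric.sphere (a j) (r j) := by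
      rcases eq_or_lt_of_le ((Metric.mem_closedBall.mp hxS.1)) with heq | hlt
      · left; exact Metric.mem_sphere.mpr heq
      · right
        have : ¬ (∀ t, x ∉ Metric.closedBall (a t) (r t)) := by
          intro hall
          exact hxD ⟨Metric.mem_ball.mpr hlt, by simpa only [Set.mem_iUnion, not_exists] using hall⟩
        push_neg at this
        obtain ⟨j, hj⟩ := this
        have hxnb : x ∉ Metric.ball (a j) (r j) := by
          intro hmem
          exact hxS.2 (Set.mem_iUnion.mpr ⟨j, hmem⟩)
        rw [Metric.mem_ball] at hxnb
        exact ⟨j, Metric.mem_sphere.mpr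
          (le_antisymm (Metric.mem_closedBall.mp hj) (not_lt.mp hxnb))⟩
    have := hgradb x hcase
    rw [hfdef]
    simp [this]
  -- maximum modulus: f vanishes on closure D
  have hf0 : ∀ z ∈ closure D, f z = 0 := by
    intro z hz
    have hbdd : Bornology.IsBounded D :=
      (Metric.isBounded_ball (x := (0:ℂ)) (r := 1)).subset Set.diff_subset
    have hdc : DiffContOnCl ℂ f D := ⟨hfdiff, hfcont.continuousOn⟩
    have := Complex.norm_le_of_forall_mem_frontier_norm_le hbdd hdc
      (C := 0) (fun w hw => by rw [hfront w hw]; simp) hz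
    have h0 : ‖f z‖ = 0 := le_antisymm this (norm_nonneg _)
    exact norm_eq_zero.mp h0
  -- hence the gradient of H vanishes on S
  have hSclos : S ⊆ closure D := by
    rw [hSdef, hDdef]
    exact aux_closure a r hr hin' hdisj'
  have hgradS : ∀ z ∈ S, fderiv ℝ H z = 0 := by
    intro z hz
    have hfz := hf0 z (hSclos hz)
    rw [hfdef] at hfz
    simp only at hfz
    have hre := congrArg Complex.re hfz
    have him := congrArg Complex.im hfz
    simp [Complex.real_smul] at hre him
    ext v
    have hv : v = (v.re : ℝ) • (1:ℂ) + (v.im : ℝ) • Complex.I := by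
      simp [Complex.real_smul, Complex.re_add_im]
    rw [hv, map_add, map_smul, map_smul]
    simp [hre, him]
  classical
  -- unit direction and far point of each hole
  set u : Fin m → ℂ := fun j => if a j = 0 then 1 else ‖a j‖⁻¹ • a j with hudef
  have hu1 : ∀ j, ‖u j‖ = 1 := by
    intro j
    rw [hudef]
    by_cases hj : a j = 0
    · simp [hj]
    · simp only [if_neg hj]
      rw [norm_smul, norm_inv, norm_norm, inv_mul_cancel₀ (norm_ne_zero_iff.mpr hj)]
  have hau : ∀ j, a j = ‖a j‖ • u j := by
    intro j
    rw [hudef]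
    by_cases hj : a j = 0
    · simp [hj]
    · simp only [if_neg hj]
      rw [smul_smul, mul_inv_cancel₀ (norm_ne_zero_iff.mpr hj), one_smul]
  set R : Fin m → ℝ := fun j => ‖a j‖ + r j with hRdef
  have hR0 : ∀ j, 0 < R j := fun j => add_pos_of_nonneg_of_pos (norm_nonneg _) (hr j)
  have hR1 : ∀ j, R j < 1 := hin'
  have hnorm_ray : ∀ j (s : ℝ), 0 ≤ s → ‖s • u j‖ = s := by
    intro j s hs
    rw [norm_smul, hu1 j, mul_one, Real.norm_eq_abs, _root_.abs_of_nonneg hs]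
  have hFsph : ∀ j, R j • u j ∈ Metric.sphere (a j) (r j) := by
    intro j
    rw [Metric.mem_sphere, Complex.dist_eq]
    have hrw : R j • u j - a j = (R j - ‖a j‖) • u j := by
      rw [sub_smul, ← hau j]
    have hrj : R j - ‖a j‖ = r j := by simp [hRdef]
    rw [hrw, hrj, norm_smul, hu1 j, mul_one, Real.norm_eq_abs, _root_.abs_of_pos (hr j)]
  -- single step of the escape argument
  have main : ∀ j, (∀ t, R j < R t → H (R t • u t) = 0) → H (R j • u j) = 0 := by
    intro j hind
    by_cases hT : ∃ t, ∃ s, s ∈ Set.Icc (R j) 1 ∧ s • u j ∈ Metric.ball (a t) (r t)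
    case neg =>
      push_neg at hT
      have hseg : ∀ s ∈ Set.Icc (R j) 1, s • u j ∈ S := by
        intro s hs
        constructor
        · rw [Metric.mem_closedBall, Complex.dist_eq, sub_zero,
            hnorm_ray j s (le_trans (hR0 j).le hs.1)]
          exact hs.2
        · intro hmem
          obtain ⟨t, ht⟩ := Set.mem_iUnion.mp hmem
          exact hT t s hs ht
      have he := aux_ray hHC1 (hR1 j).le (fun s hs => hgradS _ (hseg s hs))
      have h1u : (1:ℝ) • u j ∈ Metric.sphere (0:ℂ) 1 := by
        rw [Metric.mem_sphere, Complex.dist_eq, sub_zero,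
          hnorm_ray j 1 zero_le_one]
      rw [← he]
      exact hHout _ h1u
    case pos =>
      set T : Fin m → Set ℝ :=
        fun t => {s | s ∈ Set.Icc (R j) 1 ∧ s • u j ∈ Metric.ball (a t) (r t)} with hTdef
      have hbdd : ∀ t, BddBelow (T t) := fun t =>
        BddBelow.mono (fun s hs => hs.1) bddBelow_Icc
      have hTsub : ∀ t, T t ⊆ Set.Icc (R j) 1 := fun t s hs => hs.1
      set NE : Finset (Fin m) := Finset.univ.filter (fun t => (T t).Nonempty) with hNEdef
      obtain ⟨t₀, s₀, hs₀⟩ := hT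
      have hNEne : NE.Nonempty := ⟨t₀, by
        rw [hNEdef, Finset.mem_filter]
        exact ⟨Finset.mem_univ _, ⟨s₀, hs₀⟩⟩⟩
      set σ : Fin m → ℝ := fun t => sInf (T t) with hσdef
      have hIcc : ∀ t, (T t).Nonempty → σ t ∈ Set.Icc (R j) 1 := by
        intro t ht
        have h1 : σ t ∈ closure (T t) := csInf_mem_closure ht (hbdd t)
        exact isClosed_Icc.closure_subset ((closure_mono (hTsub t)) h1)
      have hcb : ∀ t, (T t).Nonempty → σ t • u j ∈ Metric.closedBall (a t) (r t) := by
        intro t ht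
        have h1 : σ t ∈ closure (T t) := csInf_mem_closure ht (hbdd t)
        have h2 : (fun s : ℝ => s • u j) '' closure (T t)
            ⊆ closure ((fun s : ℝ => s • u j) '' T t) :=
          image_closure_subset_closure_image (continuous_id.smul continuous_const)
        have h3 : (fun s : ℝ => s • u j) '' T t ⊆ Metric.closedBall (a t) (r t) := by
          rintro y ⟨s, hs, rfl⟩
          exact Metric.ball_subset_closedBall hs.2
        exact Metric.isClosed_closedBall.closure_subset_iff.mpr h3 (h2 ⟨σ t, h1, rfl⟩)
      obtain ⟨tstar, htstar, hmin⟩ := NE.exists_min_image σ hNEne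
      have htstarne : (T tstar).Nonempty := by
        rw [hNEdef, Finset.mem_filter] at htstar
        exact htstar.2
      set s0 : ℝ := σ tstar with hs0def
      have hs0Icc : s0 ∈ Set.Icc (R j) 1 := hIcc tstar htstarne
      -- the hole j itself never blocks the ray
      have hTj : ∀ s, s ∉ T j := by
        intro s hs
        have h1 : ‖s • u j - a j‖ < r j := by
          have := hs.2
          rwa [Metric.mem_ball, Complex.dist_eq] at this
        have h2 : s • u j - a j = (s - ‖a j‖) • u j := by
          rw [sub_smul, ← hau j]
        rw [h2, norm_smul, hu1 j, mul_one, Real.norm_eq_abs] at h1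
        have h3 : R j ≤ s := hs.1.1
        have h4 : ‖a j‖ + r j ≤ s := by simpa [hRdef] using h3
        rw [_root_.abs_of_nonneg (by linarith [hr j])] at h1
        linarith
      -- no blocking before s0
      have hseg : ∀ s ∈ Set.Icc (R j) s0, ∀ t, s • u j ∉ Metric.ball (a t) (r t) := by
        intro s hs t hmem
        have hsT : s ∈ T t := ⟨⟨hs.1, le_trans hs.2 hs0Icc.2⟩, hmem⟩
        have htne : (T t).Nonempty := ⟨s, hsT⟩
        have htNE : t ∈ NE := by
          rw [hNEdef, Finset.mem_filter]
          exact ⟨Finset.mem_univ _, htne⟩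
        have h1 : s0 ≤ σ t := hmin t htNE
        have h2 : σ t ≤ s := csInf_le (hbdd t) hsT
        have hseq : s = s0 := le_antisymm hs.2 (le_trans h1 h2)
        have hσt : σ t = s0 := le_antisymm (hseq ▸ h2) h1
        have hs0T : s0 ∈ T t := hseq ▸ hsT
        rcases eq_or_lt_of_le hs0Icc.1 with hRj | hRj
        · -- the blocked point is the far point of hole j, impossible since it lies in S
          have hFS : s0 • u j ∈ S := by
            rw [← hRj]
            exact hsub1 j (hFsph j)
          exact hFS.2 (Set.mem_iUnion.mpr ⟨t, hs0T.2⟩)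
        · -- T t is open near s0, contradicting minimality of σ t
          have hopen : IsOpen {s' : ℝ | s' • u j ∈ Metric.ball (a t) (r t)} :=
            Metric.isOpen_ball.preimage (continuous_id.smul continuous_const)
          have hnhds : {s' : ℝ | s' • u j ∈ Metric.ball (a t) (r t)} ∈ nhds s0 :=
            hopen.mem_nhds hs0T.2
          obtain ⟨l, u', hlu, hsubint⟩ := mem_nhds_iff_exists_Ioo_subset.mp hnhds
          set s' : ℝ := (max l (R j) + s0) / 2 with hs'def
          have hM : max l (R j) < s0 := max_lt hlu.1 hRj
          have hs'lt : s' < s0 := by rw [hs'def]; linarith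
          have hs'gt : max l (R j) < s' := by rw [hs'def]; linarith
          have hs'T : s' ∈ T t := by
            refine ⟨⟨le_trans (le_max_right l (R j)) hs'gt.le, le_trans hs'lt.le hs0Icc.2⟩, ?_⟩
            exact hsubint ⟨lt_of_le_of_lt (le_max_left l (R j)) hs'gt, hs'lt.trans hlu.2⟩
          have hfin : σ t ≤ s' := csInf_le (hbdd t) hs'T
          rw [hσt] at hfin
          linarith
      -- s0 • u j is on the sphere of hole tstar
      have hsphere : s0 • u j ∈ Metric.sphere (a tstar) (r tstar) := by
        have h1 := hcb tstar htstarne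
        have h2 := hseg s0 ⟨hs0Icc.1, le_rfl⟩ tstar
        rw [Metric.mem_closedBall] at h1
        rw [Metric.mem_ball] at h2
        exact Metric.mem_sphere.mpr (le_antisymm h1 (not_lt.mp h2))
      -- the blocking hole reaches strictly farther out
      have hs0norm : ‖s0 • u j‖ = s0 := hnorm_ray j s0 (le_trans (hR0 j).le hs0Icc.1)
      have hs0le : s0 ≤ R tstar := by
        have h1 : ‖s0 • u j‖ ≤ ‖a tstar‖ + ‖s0 • u j - a tstar‖ := by
          calc ‖s0 • u j‖ = ‖a tstar + (s0 • u j - a tstar)‖ := by ring_nf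
            _ ≤ ‖a tstar‖ + ‖s0 • u j - a tstar‖ := norm_add_le _ _
        have h2 : ‖s0 • u j - a tstar‖ = r tstar := by
          have := hsphere
          rwa [Metric.mem_sphere, Complex.dist_eq] at this
        rw [hs0norm, h2] at h1
        exact h1
      have hRlt : R j < R tstar := by
        rcases lt_or_ge (R j) (R tstar) with hgood | hbad
        · exact hgood
        · exfalso
          have hs0R : s0 = R j := le_antisymm (le_trans hs0le hbad) hs0Icc.1
          rcases eq_or_ne tstar j with rfl | hne
          · obtain ⟨s, hs⟩ := htstarne
            exact hTj s hs
          · have hFj : s0 • u j ∈ Metric.sphere (a j) (r j) := by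
              rw [hs0R]
              exact hFsph j
            have e1 : ‖s0 • u j - a j‖ = r j := by
              have := hFj
              rwa [Metric.mem_sphere, Complex.dist_eq] at this
            have e2 : ‖s0 • u j - a tstar‖ = r tstar := by
              have := hsphere
              rwa [Metric.mem_sphere, Complex.dist_eq] at this
            have h1 : ‖a j - a tstar‖ ≤ ‖s0 • u j - a j‖ + ‖s0 • u j - a tstar‖ := by
              calc ‖a j - a tstar‖ = ‖-(s0 • u j - a j) + (s0 • u j - a tstar)‖ := by ring_nf
                _ ≤ ‖-(s0 • u j - a j)‖ + ‖s0 • u j - a tstar‖ := norm_add_le _ _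
                _ = ‖s0 • u j - a j‖ + ‖s0 • u j - a tstar‖ := by rw [norm_neg]
            rw [e1, e2] at h1
            exact absurd h1 (not_le.mpr (hdisj' j tstar hne.symm))
      -- transfer the value along the segment and conclude by the induction hypothesis
      have hsegS : ∀ s ∈ Set.Icc (R j) s0, s • u j ∈ S := by
        intro s hs
        constructor
        · rw [Metric.mem_closedBall, Complex.dist_eq, sub_zero,
            hnorm_ray j s (le_trans (hR0 j).le hs.1)]
          exact le_trans hs.2 hs0Icc.2
        · intro hmem
          obtain ⟨t, ht⟩ := Set.mem_iUnion.mp hmem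
          exact hseg s hs t ht
      have he := aux_ray hHC1 hs0Icc.1 (fun s hs => hgradS _ (hsegS s hs))
      calc H (R j • u j) = H (s0 • u j) := he.symm
        _ = lam tstar := hHsph tstar _ hsphere
        _ = H (R tstar • u tstar) := (hHsph tstar _ (hFsph tstar)).symm
        _ = 0 := hind tstar hRlt
  -- strong induction on the number of holes reaching farther out
  have key : ∀ n : ℕ, ∀ j,
      (Finset.univ.filter (fun t => R j < R t)).card ≤ n → H (R j • u j) = 0 := by
    intro n
    induction n with
    | zero =>
      intro j hcard
      refine main j fun t hlt => absurd hcard ?_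
      rw [not_le]
      refine Finset.card_pos.mpr ⟨t, ?_⟩
      rw [Finset.mem_filter]
      exact ⟨Finset.mem_univ _, hlt⟩
    | succ n ih =>
      intro j hcard
      refine main j fun t hlt => ih t ?_
      have htmem : t ∈ Finset.univ.filter (fun s => R j < R s) := by
        rw [Finset.mem_filter]
        exact ⟨Finset.mem_univ _, hlt⟩
      have hsub : Finset.univ.filter (fun s => R t < R s)
          ⊆ (Finset.univ.filter (fun s => R j < R s)).erase t := by
        intro s hsmem
        rw [Finset.mem_filter] at hsmem
        rw [Finset.mem_erase, Finset.mem_filter]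
        exact ⟨fun hst => by rw [hst] at hsmem; exact lt_irrefl _ hsmem.2,
          Finset.mem_univ _, lt_trans hlt hsmem.2⟩
      have h1 := Finset.card_le_card hsub
      have h2 := Finset.card_erase_of_mem htmem
      omega
  intro p
  have h1 := key _ p le_rfl
  have h2 := hHsph p (R p • u p) (hFsph p)
  rw [h2] at h1
  exact h1
end

section
/- Let γ ⊂ ℂ be a Jordan curve and a, b two distinct points of ℂ \ γ lying in different connected components of ℂ \ γ, with a in the bounded component. If f : closure(𝔻) → ℂ is continuous, holomorphic on 𝔻, and f(z) ∈ γ for all z ∈ ∂𝔻, and if f attains the value a in 𝔻, then the winding number of f|_{∂𝔻} around a is positive (≥ 1). -/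
open Complex Metric Set Real Function

private lemma lift_sub_const {F G : ℝ → ℂ} (hF : Continuous F) (hG : Continuous G)
    (h : ∀ θ, Complex.exp (F θ) = Complex.exp (G θ)) (θ : ℝ) :
    F θ - G θ = F 0 - G 0 := by
  have hD : ∀ t : ℝ, ∃ n : ℤ, F t - G t = n * (2 * Real.pi * I) := by
    intro t
    rw [← Complex.exp_eq_one_iff, Complex.exp_sub, h t, div_self (Complex.exp_ne_zero _)]
  set N : ℝ → ℝ := fun t => (F t - G t).im / (2 * Real.pi) with hNdef
  have hNint : ∀ t : ℝ, ∃ n : ℤ, N t = n := by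
    intro t
    obtain ⟨n, hn⟩ := hD t
    refine ⟨n, ?_⟩
    have him : (F t - G t).im = n * (2 * Real.pi) := by
      rw [hn]; simp [Complex.mul_im]
    rw [hNdef]; simp only [him]
    field_simp
  have hNc : Continuous N := (Complex.continuous_im.comp (hF.sub hG)).div_const _
  have hS : IsClopen {t : ℝ | N t = N 0} := by
    constructor
    · -- closed
      exact isClosed_eq hNc continuous_const
    · -- open
      rw [isOpen_iff_mem_nhds]
      intro t ht
      have : ∀ᶠ u in nhds t, |N u - N t| < 1 := by
        have : ContinuousAt (fun u => |N u - N t|) t := ((hNc.sub continuous_const).abs).continuousAt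
        have h0 : |N t - N t| < 1 := by simp
        exact this.eventually_lt continuous_const.continuousAt (by simpa using h0) |>.mono (fun x hx => hx)
      filter_upwards [this] with u hu
      obtain ⟨n, hn⟩ := hNint u
      obtain ⟨m, hm⟩ := hNint t
      have : n = m := by
        have : |(n : ℝ) - m| < 1 := by rw [← hn, ← hm]; exact hu
        have := abs_lt.mp this
        have h1 : (n : ℝ) < m + 1 := by linarith [this.2]
        have h2 : (m : ℝ) - 1 < n := by linarith [this.1]
        exact_mod_cast le_antisymm (by exact_mod_cast (by push_cast at h1 ⊢; exact_mod_cast Int.lt_add_one_iff.mp (by exact_mod_cast h1))) (by exact_mod_cast Int.lt_add_one_iff.mp (by push_cast at h2 ⊢; exact_mod_cast (by linarith : (m : ℝ) < n + 1)))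
      show N u = N 0
      have ht' : N t = N 0 := ht
      rw [hn, this, ← hm, ht']
  have := (isClopen_iff.mp hS).resolve_left (Set.nonempty_iff_ne_empty.mp ⟨0, rfl⟩)
  have hNt : N θ = N 0 := by
    have : θ ∈ {t : ℝ | N t = N 0} := by rw [this]; trivial
    exact this
  obtain ⟨n, hn⟩ := hD θ
  obtain ⟨m, hm⟩ := hD 0
  have hnm : (n : ℝ) = m := by
    have h1 : N θ = n := by
      rw [hNdef]; simp only [hn]; simp [Complex.mul_im]
    have h2 : N 0 = m := by
      rw [hNdef]; simp only [hm]; simp [Complex.mul_im]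
    rw [h1, h2] at hNt; exact hNt
  have : n = m := by exact_mod_cast hnm
  rw [hn, hm, this]

private lemma circle_lift {g : ℂ → ℂ} {s : ℝ} (hs : 0 < s) (hs1 : s < 1)
    (hg : DifferentiableOn ℂ g (Metric.ball 0 1))
    (hgn : ∀ θ : ℝ, g (circleMap 0 s θ) ≠ 0) :
    ∃ F : ℝ → ℂ, Continuous F ∧ (∀ θ, Complex.exp (F θ) = g (circleMap 0 s θ)) ∧
      F (2 * Real.pi) - F 0 = ∮ z in C(0, s), deriv g z / g z := by
  have hmem : ∀ θ : ℝ, circleMap 0 s θ ∈ Metric.ball (0 : ℂ) 1 := by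
    intro θ
    simp only [Metric.mem_ball, dist_zero_right]
    rw [norm_circleMap_zero]
    rw [abs_of_pos hs]; exact hs1
  have hdiff : ∀ θ : ℝ, DifferentiableAt ℂ g (circleMap 0 s θ) := fun θ =>
    hg.differentiableAt (isOpen_ball.mem_nhds (hmem θ))
  have han : AnalyticOnNhd ℂ g (Metric.ball 0 1) := hg.analyticOnNhd isOpen_ball
  have hdc : ContinuousOn (deriv g) (Metric.ball 0 1) :=
    han.deriv.continuousOn
  have hgc : Continuous fun θ : ℝ => g (circleMap 0 s θ) :=
    hg.continuousOn.comp_continuous (continuous_circleMap 0 s) hmem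
  have hdcc : Continuous fun θ : ℝ => deriv g (circleMap 0 s θ) :=
    hdc.comp_continuous (continuous_circleMap 0 s) hmem
  set ψ : ℝ → ℂ := fun t =>
    deriv g (circleMap 0 s t) * (circleMap 0 s t * I) / g (circleMap 0 s t) with hψdef
  have hψc : Continuous ψ :=
    ((hdcc.mul ((continuous_circleMap 0 s).mul continuous_const)).div hgc hgn)
  have hInt : ∀ θ : ℝ, HasDerivAt (fun u => ∫ t in (0:ℝ)..u, ψ t) (ψ θ) θ := fun θ =>
    intervalIntegral.integral_hasDerivAt_right (hψc.intervalIntegrable 0 θ)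
      (hψc.stronglyMeasurableAtFilter _ _) hψc.continuousAt
  set F : ℝ → ℂ := fun θ => Complex.log (g (circleMap 0 s 0)) + ∫ t in (0:ℝ)..θ, ψ t with hFdef
  have hFd : ∀ θ : ℝ, HasDerivAt F (ψ θ) θ := fun θ => (hInt θ).const_add _
  have hFc : Continuous F := by
    have : Differentiable ℝ F := fun θ => (hFd θ).differentiableAt
    exact this.continuous
  have hcm : ∀ θ : ℝ, HasDerivAt (fun t : ℝ => g (circleMap 0 s t))
      (deriv g (circleMap 0 s θ) * (circleMap 0 s θ * I)) θ := by
    intro θ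
    have h1 : HasDerivAt g (deriv g (circleMap 0 s θ)) (circleMap 0 s θ) :=
      (hdiff θ).hasDerivAt
    exact h1.comp θ (hasDerivAt_circleMap 0 s θ)
  set E : ℝ → ℂ := fun θ => Complex.exp (-F θ) * g (circleMap 0 s θ) with hEdef
  have hEd : ∀ θ : ℝ, HasDerivAt E 0 θ := by
    intro θ
    have h1 : HasDerivAt (fun t => Complex.exp (-F t)) (-ψ θ * Complex.exp (-F θ)) θ := by
      have := ((hFd θ).neg).cexp
      simpa [mul_comm] using this
    have h2 := h1.mul (hcm θ)
    have heq : -ψ θ * Complex.exp (-F θ) * g (circleMap 0 s θ) +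
        Complex.exp (-F θ) * (deriv g (circleMap 0 s θ) * (circleMap 0 s θ * I)) = 0 := by
      rw [hψdef]
      field_simp [hgn θ]
      ring
    rw [heq] at h2
    exact h2
  have hEconst : ∀ θ : ℝ, E θ = E 0 := by
    intro θ
    have hdiffE : Differentiable ℝ E := fun x => (hEd x).differentiableAt
    have hderivE : ∀ x, deriv E x = 0 := fun x => (hEd x).deriv
    exact is_const_of_deriv_eq_zero hdiffE hderivE θ 0
  have hE0 : E 0 = 1 := by
    rw [hEdef]
    simp only [hFdef]
    rw [intervalIntegral.integral_same, add_zero, Complex.exp_neg, Complex.exp_log (hgn 0)]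
    exact inv_mul_cancel₀ (hgn 0)
  have hexp : ∀ θ : ℝ, Complex.exp (F θ) = g (circleMap 0 s θ) := by
    intro θ
    have h := (hEconst θ).trans hE0
    rw [hEdef] at h
    simp only at h
    have := congrArg (fun w => Complex.exp (F θ) * w) h
    simp only [mul_one] at this
    rw [← mul_assoc, ← Complex.exp_add, add_neg_cancel, Complex.exp_zero, one_mul] at this
    exact this.symm
  refine ⟨F, hFc, hexp, ?_⟩
  have hdiffint : F (2 * Real.pi) - F 0 = ∫ t in (0:ℝ)..(2 * Real.pi), ψ t := by
    rw [hFdef]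
    simp only
    rw [intervalIntegral.integral_same]
    ring
  rw [hdiffint]
  rw [circleIntegral]
  refine intervalIntegral.integral_congr fun t _ => ?_
  rw [deriv_circleMap]
  rw [smul_eq_mul, hψdef]
  ring

private lemma zeros_finite {g : ℂ → ℂ} {s : ℝ} (hs1 : s < 1)
    (hg : DifferentiableOn ℂ g (Metric.ball 0 1))
    (hne : ∃ z ∈ Metric.ball (0:ℂ) 1, g z ≠ 0) :
    {z ∈ Metric.closedBall (0:ℂ) s | g z = 0}.Finite := by
  by_contra hinf
  rw [← Set.Infinite] at hinf
  have hsub : {z ∈ Metric.closedBall (0:ℂ) s | g z = 0} ⊆ Metric.closedBall (0:ℂ) s :=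
    fun z hz => hz.1
  obtain ⟨z0, hz0K, hacc⟩ :=
    hinf.exists_accPt_of_subset_isCompact (isCompact_closedBall 0 s) hsub
  have hz0b : z0 ∈ Metric.ball (0:ℂ) 1 := by
    rw [Metric.mem_closedBall] at hz0K
    rw [Metric.mem_ball]
    linarith
  have han : AnalyticOnNhd ℂ g (Metric.ball 0 1) := hg.analyticOnNhd isOpen_ball
  have hfreq : ∃ᶠ z in nhdsWithin z0 {z0}ᶜ, g z = 0 := by
    have := (accPt_iff_frequently (x := z0)).mp hacc
    rw [Filter.frequently_iff] at this ⊢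
    intro U hU
    rw [mem_nhdsWithin] at hU
    obtain ⟨V, hV, hzV, hVU⟩ := hU
    obtain ⟨y, hy, hy2⟩ := this (hV.mem_nhds hzV)
    exact ⟨y, hVU ⟨hy, hy2.1⟩, hy2.2.2⟩
  have := (han z0 hz0b).frequently_zero_iff_eventually_zero.mp hfreq
  have heq := han.eqOn_zero_of_preconnected_of_frequently_eq_zero
    (convex_ball (0:ℂ) 1).isPreconnected hz0b hfreq
  obtain ⟨w, hw, hwne⟩ := hne
  exact hwne (heq hw)

private lemma dslope_factor {g : ℂ → ℂ} {z0 : ℂ} {p : FormalMultilinearSeries ℂ ℂ ℂ}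
    (hp : HasFPowerSeriesAt g p z0) :
    ∀ j ≤ p.order, ∀ z, z ≠ z0 →
      g z = (z - z0) ^ j * (Function.swap dslope z0)^[j] g z := by
  intro j hj
  induction j with
  | zero => intro z _; simp
  | succ j ih =>
    intro z hz
    have hval : (Function.swap dslope z0)^[j] g z0 = 0 := by
      have hps := hp.has_fpower_series_iterate_dslope_fslope j
      have hc := (hps.coeff_zero fun _ => 1)
      have : (FormalMultilinearSeries.fslope^[j] p).coeff 0 = p.coeff j := by
        rw [FormalMultilinearSeries.coeff_iterate_fslope]
        norm_num
      rw [show (FormalMultilinearSeries.fslope^[j] p) 0 (fun _ => 1) =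
        (FormalMultilinearSeries.fslope^[j] p).coeff 0 from rfl, this] at hc
      have hz0 : p.coeff j = 0 := by
        rw [FormalMultilinearSeries.coeff_eq_zero]
        exact FormalMultilinearSeries.apply_eq_zero_of_lt_order (lt_of_lt_of_le (Nat.lt_succ_self j) hj)
      rw [← hc, hz0]
    have hstep : (Function.swap dslope z0)^[j+1] g z =
        (z - z0)⁻¹ * (Function.swap dslope z0)^[j] g z := by
      rw [Function.iterate_succ_apply']
      rw [show Function.swap dslope z0 ((Function.swap dslope z0)^[j] g) =
        dslope ((Function.swap dslope z0)^[j] g) z0 from rfl]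
      rw [dslope_of_ne _ hz, slope_def_field, hval, sub_zero]
      field_simp [sub_ne_zero.mpr hz]
    rw [hstep, ih (le_trans (Nat.le_succ j) hj) z hz]
    have hzz : (z - z0) ≠ 0 := sub_ne_zero.mpr hz
    field_simp
    ring

private lemma arg_principle : ∀ (n : ℕ) (g : ℂ → ℂ) (s : ℝ), 0 < s → s < 1 →
    DifferentiableOn ℂ g (Metric.ball 0 1) →
    (∀ z ∈ Metric.sphere (0:ℂ) s, g z ≠ 0) →
    ({z ∈ Metric.closedBall (0:ℂ) s | g z = 0}).ncard ≤ n →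
    ∃ m : ℕ, (∮ z in C(0, s), deriv g z / g z) = 2 * Real.pi * I * m ∧
      ((∃ z ∈ Metric.ball (0:ℂ) s, g z = 0) → 1 ≤ m) := by
  intro n
  induction n with
  | zero =>
    intro g s hs hs1 hg hgn hcard
    -- no zeros in the closed ball
    have hne : ∃ z ∈ Metric.ball (0:ℂ) 1, g z ≠ 0 := by
      refine ⟨(s : ℂ), ?_, hgn _ ?_⟩
      · simp [Metric.mem_ball, Complex.norm_real, abs_of_pos hs]; exact hs1
      · simp [Metric.mem_sphere, Complex.norm_real, abs_of_pos hs]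
    have hfin := zeros_finite hs1 hg hne
    have hempty : {z ∈ Metric.closedBall (0:ℂ) s | g z = 0} = ∅ := by
      rw [← Set.ncard_eq_zero hfin]
      omega
    have hnz : ∀ z ∈ Metric.closedBall (0:ℂ) s, g z ≠ 0 := by
      intro z hz hz0
      have : z ∈ ({z ∈ Metric.closedBall (0:ℂ) s | g z = 0}) := ⟨hz, hz0⟩
      rw [hempty] at this
      exact this
    have hsub : Metric.closedBall (0:ℂ) s ⊆ Metric.ball (0:ℂ) 1 := by
      intro z hz
      rw [Metric.mem_closedBall] at hz
      rw [Metric.mem_ball]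
      linarith
    have han : AnalyticOnNhd ℂ g (Metric.ball 0 1) := hg.analyticOnNhd isOpen_ball
    have hdan : AnalyticOnNhd ℂ (deriv g) (Metric.ball 0 1) := han.deriv
    have hcont : ContinuousOn (fun z => deriv g z / g z) (Metric.closedBall (0:ℂ) s) := by
      refine ContinuousOn.div ?_ ?_ hnz
      · exact (hdan.continuousOn).mono hsub
      · exact hg.continuousOn.mono hsub
    have hzero : (∮ z in C(0, s), deriv g z / g z) = 0 := by
      refine circleIntegral_eq_zero_of_differentiable_on_off_countable hs.le
        Set.countable_empty hcont ?_
      intro z hz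
      have hzb : z ∈ Metric.ball (0:ℂ) 1 := hsub (Metric.ball_subset_closedBall hz.1)
      exact ((hdan z hzb).differentiableAt).div ((han z hzb).differentiableAt)
        (hnz z (Metric.ball_subset_closedBall hz.1))
    refine ⟨0, by simp [hzero], ?_⟩
    rintro ⟨z, hz, hz0⟩
    exact absurd hz0 (hnz z (Metric.ball_subset_closedBall hz))
  | succ n ih =>
    intro g s hs hs1 hg hgn hcard
    have hne : ∃ z ∈ Metric.ball (0:ℂ) 1, g z ≠ 0 := by
      refine ⟨(s : ℂ), ?_, hgn _ ?_⟩
      · simp [Metric.mem_ball, Complex.norm_real, abs_of_pos hs]; exact hs1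
      · simp [Metric.mem_sphere, Complex.norm_real, abs_of_pos hs]
    have hfin := zeros_finite hs1 hg hne
    by_cases hZ : {z ∈ Metric.closedBall (0:ℂ) s | g z = 0} = ∅
    · exact ih g s hs hs1 hg hgn (by rw [hZ]; simp)
    · obtain ⟨z0, hz0⟩ := Set.nonempty_iff_ne_empty.mpr hZ
      obtain ⟨hz0cb, hgz0⟩ := hz0
      have hz0s : z0 ∈ Metric.ball (0:ℂ) s := by
        rcases lt_or_eq_of_le (Metric.mem_closedBall.mp hz0cb) with h | h
        · exact Metric.mem_ball.mpr h
        · exact absurd hgz0 (hgn z0 (Metric.mem_sphere.mpr h))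
      have hsub : Metric.closedBall (0:ℂ) s ⊆ Metric.ball (0:ℂ) 1 := by
        intro z hz
        rw [Metric.mem_closedBall] at hz
        rw [Metric.mem_ball]
        linarith
      have hz0b : z0 ∈ Metric.ball (0:ℂ) 1 := hsub hz0cb
      have han : AnalyticOnNhd ℂ g (Metric.ball 0 1) := hg.analyticOnNhd isOpen_ball
      obtain ⟨p, hp⟩ := han z0 hz0b
      have hp0 : p ≠ 0 := by
        intro h0
        have hev : ∀ᶠ z in nhds z0, g z = 0 := hp.locally_zero_iff.mpr h0
        have hfreq : ∃ᶠ z in nhdsWithin z0 {z0}ᶜ, g z = 0 :=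
          (hev.filter_mono nhdsWithin_le_nhds).frequently
        have heq := han.eqOn_zero_of_preconnected_of_frequently_eq_zero
          (convex_ball (0:ℂ) 1).isPreconnected hz0b hfreq
        obtain ⟨w, hw, hwne⟩ := hne
        exact hwne (heq hw)
      set k := p.order with hkdef
      have hk1 : 1 ≤ k := by
        by_contra hk
        push_neg at hk
        interval_cases k
        · have := (FormalMultilinearSeries.order_eq_zero_iff hp0).mp hkdef.symm
          have hc0 : p.coeff 0 = g z0 := hp.coeff_zero fun _ => 1
          rw [hgz0] at hc0
          exact this (FormalMultilinearSeries.coeff_eq_zero.mp hc0)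
      set h : ℂ → ℂ := (Function.swap dslope z0)^[k] g with hhdef
      have hfac : ∀ z, z ≠ z0 → g z = (z - z0) ^ k * h z :=
        fun z hz => dslope_factor hp k le_rfl z hz
      have hhz0 : h z0 ≠ 0 := hp.iterate_dslope_fslope_ne_zero hp0
      -- h is differentiable on the ball
      have hhd : DifferentiableOn ℂ h (Metric.ball 0 1) := by
        intro z hz
        by_cases hzz : z = z0
        · subst hzz
          have := (hp.has_fpower_series_iterate_dslope_fslope k).analyticAt
          exact this.differentiableAt.differentiableWithinAt
        · have hev : h =ᶠ[nhds z] fun w => (w - z0)⁻¹ ^ k * g w := by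
            have hU : IsOpen ({z0}ᶜ : Set ℂ) := isOpen_compl_singleton
            filter_upwards [hU.mem_nhds hzz] with w hw
            have hw' : w ≠ z0 := hw
            have := hfac w hw'
            have hww : (w - z0) ≠ 0 := sub_ne_zero.mpr hw'
            field_simp at this ⊢
            rw [this]
            rw [one_div, inv_pow, mul_comm ((w - z0) ^ k), mul_assoc, mul_inv_cancel₀ (pow_ne_zero _ hww), mul_one]
          have hda : DifferentiableAt ℂ (fun w => (w - z0)⁻¹ ^ k * g w) z := by
            refine DifferentiableAt.mul ?_ (hg.differentiableAt (isOpen_ball.mem_nhds hz))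
            exact (((differentiableAt_id.sub_const z0).inv (sub_ne_zero.mpr hzz)).pow k)
          exact (Filter.EventuallyEq.differentiableAt_iff hev |>.mpr hda).differentiableWithinAt
      -- h does not vanish on the sphere
      have hhn : ∀ z ∈ Metric.sphere (0:ℂ) s, h z ≠ 0 := by
        intro z hz hz0'
        have hzz : z ≠ z0 := by
          intro hzz
          rw [hzz] at hz
          exact absurd (Metric.mem_ball.mp hz0s) (by rw [Metric.mem_sphere] at hz; simp [hz])
        have := hfac z hzz
        rw [hz0', mul_zero] at this
        exact hgn z hz this
      -- zeros of h are strictly fewer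
      have hZh : {z ∈ Metric.closedBall (0:ℂ) s | h z = 0} ⊆
          {z ∈ Metric.closedBall (0:ℂ) s | g z = 0} \ {z0} := by
        rintro z ⟨hz1, hz2⟩
        have hzz : z ≠ z0 := fun hzz => hhz0 (hzz ▸ hz2)
        refine ⟨⟨hz1, ?_⟩, hzz⟩
        rw [hfac z hzz, hz2, mul_zero]
      have hcard' : ({z ∈ Metric.closedBall (0:ℂ) s | h z = 0}).ncard ≤ n := by
        have h1 : ({z ∈ Metric.closedBall (0:ℂ) s | g z = 0} \ {z0}).ncard =
            ({z ∈ Metric.closedBall (0:ℂ) s | g z = 0}).ncard - 1 :=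
          Set.ncard_diff_singleton_of_mem ⟨hz0cb, hgz0⟩
        have h2 := Set.ncard_le_ncard hZh hfin.diff
        have h3 : 1 ≤ ({z ∈ Metric.closedBall (0:ℂ) s | g z = 0}).ncard :=
          (Set.ncard_pos hfin).mpr ⟨z0, hz0cb, hgz0⟩
        omega
      obtain ⟨m', hm', _⟩ := ih h s hs hs1 hhd hhn hcard'
      -- split the integral
      have hdan : AnalyticOnNhd ℂ (deriv g) (Metric.ball 0 1) := han.deriv
      have hhan : AnalyticOnNhd ℂ h (Metric.ball 0 1) := hhd.analyticOnNhd isOpen_ball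
      have hhdan : AnalyticOnNhd ℂ (deriv h) (Metric.ball 0 1) := hhan.deriv
      -- derivative identity on points away from z0
      have hderiv : ∀ z, z ∈ Metric.ball (0:ℂ) 1 → z ≠ z0 →
          deriv g z = (k : ℂ) * (z - z0) ^ (k - 1) * h z + (z - z0) ^ k * deriv h z := by
        intro z hzb hzz
        have hev : g =ᶠ[nhds z] fun w => (w - z0) ^ k * h w := by
          filter_upwards [isOpen_compl_singleton.mem_nhds hzz] with w hw
          exact hfac w hw
        rw [hev.deriv_eq]
        have h1 : HasDerivAt (fun w => (w - z0) ^ k) ((k : ℂ) * (z - z0) ^ (k - 1)) z := by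
          have := ((hasDerivAt_id z).sub_const z0).pow k
          simp only [id, mul_one] at this
          exact this
        have h2 : HasDerivAt h (deriv h z) z :=
          (hhd.differentiableAt (isOpen_ball.mem_nhds hzb)).hasDerivAt
        exact (h1.mul h2).deriv
      -- pointwise identity on the sphere
      have hptw : Set.EqOn (fun z => deriv g z / g z - (k : ℂ) * (z - z0)⁻¹)
          (fun z => deriv h z / h z) (Metric.sphere (0:ℂ) s) := by
        intro z hz
        have hzz : z ≠ z0 := by
          intro hzz
          rw [hzz] at hz
          rw [Metric.mem_sphere] at hz
          exact absurd (Metric.mem_ball.mp hz0s) (by simp [hz])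
        have hzb : z ∈ Metric.ball (0:ℂ) 1 := hsub (Metric.sphere_subset_closedBall hz)
        have hgz : g z ≠ 0 := hgn z hz
        have hhz : h z ≠ 0 := hhn z hz
        have hzznz : (z - z0) ≠ 0 := sub_ne_zero.mpr hzz
        simp only
        rw [hderiv z hzb hzz, hfac z hzz]
        have hksplit : (z - z0) ^ k = (z - z0) * (z - z0) ^ (k - 1) := by
          conv_lhs => rw [show k = 1 + (k - 1) by omega]
          rw [pow_add, pow_one]
        rw [hksplit]
        have hpow : (z - z0) ^ (k - 1) ≠ 0 := pow_ne_zero _ hzznz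
        field_simp
        ring
      have hint1 : CircleIntegrable (fun z => deriv g z / g z) 0 s := by
        refine ContinuousOn.circleIntegrable hs.le ?_
        refine ContinuousOn.div ?_ ?_ hgn
        · exact hdan.continuousOn.mono ((Metric.sphere_subset_closedBall).trans hsub)
        · exact hg.continuousOn.mono ((Metric.sphere_subset_closedBall).trans hsub)
      have hint2 : CircleIntegrable (fun z => (k : ℂ) * (z - z0)⁻¹) 0 s := by
        refine ContinuousOn.circleIntegrable hs.le ?_
        refine ContinuousOn.mul continuousOn_const ?_
        refine ContinuousOn.inv₀ ((continuousOn_id.sub continuousOn_const)) ?_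
        intro z hz
        refine sub_ne_zero.mpr ?_
        intro hzz
        rw [hzz] at hz
        rw [Metric.mem_sphere] at hz
        exact absurd (Metric.mem_ball.mp hz0s) (by simp [hz])
      have hsplit : (∮ z in C(0, s), (deriv g z / g z - (k : ℂ) * (z - z0)⁻¹)) =
          (∮ z in C(0, s), deriv g z / g z) - ∮ z in C(0, s), (k : ℂ) * (z - z0)⁻¹ :=
        circleIntegral.integral_sub hint1 hint2
      have hinv : (∮ z in C(0, s), (z - z0)⁻¹) = 2 * Real.pi * I :=
        circleIntegral.integral_sub_inv_of_mem_ball hz0s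
      have hconst : (∮ z in C(0, s), (k : ℂ) * (z - z0)⁻¹) = (k : ℂ) * (2 * Real.pi * I) := by
        rw [circleIntegral.integral_const_mul, hinv]
      have hco := circleIntegral.integral_congr hs.le hptw
      rw [hsplit, hconst, hm'] at hco
      refine ⟨k + m', ?_, fun _ => by omega⟩
      have : (∮ z in C(0, s), deriv g z / g z) = (k : ℂ) * (2 * Real.pi * I) + 2 * Real.pi * I * m' := by
        linear_combination hco
      rw [this]
      push_cast
      ring

/-- If `f` is continuous on the closed unit disc, holomorphic on the open disc, maps
`∂𝔻` into a Jordan curve `γ`, and attains in `𝔻` a value `a` lying in the bounded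
component of `ℂ \ γ` (with some `b` in a different component), then the winding number
of `f|∂𝔻` around `a` is at least `1`: any continuous argument lift `A` of
`θ ↦ f(e^{iθ}) − a` increases by at least `2π` over `[0, 2π]`. -/
theorem stmt14 (γ : Set ℂ) (φ : ℂ → ℂ)
    (hγ : γ = φ '' Metric.sphere (0 : ℂ) 1)
    (hφc : ContinuousOn φ (Metric.sphere (0 : ℂ) 1))
    (hφi : Set.InjOn φ (Metric.sphere (0 : ℂ) 1))
    (a b : ℂ) (ha : a ∉ γ) (hb : b ∉ γ) (hab : a ≠ b)
    (hcomp : connectedComponentIn γᶜ a ≠ connectedComponentIn γᶜ b)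
    (habdd : Bornology.IsBounded (connectedComponentIn γᶜ a))
    (f : ℂ → ℂ) (hfc : ContinuousOn f (Metric.closedBall 0 1))
    (hfh : DifferentiableOn ℂ f (Metric.ball 0 1))
    (hfγ : ∀ z ∈ Metric.sphere (0 : ℂ) 1, f z ∈ γ)
    (hattain : ∃ z ∈ Metric.ball (0 : ℂ) 1, f z = a) :
    ∀ A ρ : ℝ → ℝ, Continuous A → Continuous ρ → (∀ θ, 0 < ρ θ) →
      (∀ θ : ℝ, f (Complex.exp (θ * Complex.I)) - a =
        (ρ θ : ℂ) * Complex.exp ((A θ : ℂ) * Complex.I)) →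
      2 * Real.pi ≤ A (2 * Real.pi) - A 0 := by
  intro A ρ hA hρ hρpos hlift
  set g : ℂ → ℂ := fun z => f z - a with hgdef
  have hgc : ContinuousOn g (Metric.closedBall 0 1) := hfc.sub continuousOn_const
  have hgd : DifferentiableOn ℂ g (Metric.ball 0 1) := hfh.sub_const a
  have hgs : ∀ z ∈ Metric.sphere (0:ℂ) 1, g z ≠ 0 := by
    intro z hz h0
    exact ha (by rw [show a = f z from (sub_eq_zero.mp h0).symm]; exact hfγ z hz)
  obtain ⟨z0, hz0b, hz0⟩ := hattain
  have hgz0 : g z0 = 0 := by rw [hgdef]; simp [hz0]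
  -- minimum of |g| on the unit sphere
  have hsphcomp : IsCompact (Metric.sphere (0:ℂ) 1) := isCompact_sphere 0 1
  have hsphne : (Metric.sphere (0:ℂ) 1).Nonempty := ⟨1, by simp⟩
  have hgabs : ContinuousOn (fun z => ‖g z‖) (Metric.sphere (0:ℂ) 1) :=
    (continuous_norm.comp_continuousOn
      (hgc.mono Metric.sphere_subset_closedBall))
  obtain ⟨w, hw, hwmin⟩ := hsphcomp.exists_isMinOn hsphne hgabs
  set m : ℝ := ‖g w‖ with hmdef
  have hmpos : 0 < m := by
    rw [hmdef]
    exact norm_pos_iff.mpr (hgs w hw)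
  have hmle : ∀ z ∈ Metric.sphere (0:ℂ) 1, m ≤ ‖g z‖ := fun z hz => hwmin hz
  -- zero set and its maximal radius
  set Z : Set ℂ := {z ∈ Metric.closedBall (0:ℂ) 1 | g z = 0} with hZdef
  have hZclosed : IsClosed Z := by
    have : Z = Metric.closedBall (0:ℂ) 1 ∩ g ⁻¹' {0} := by
      ext z; simp [hZdef]
    rw [this]
    exact hgc.preimage_isClosed_of_isClosed Metric.isClosed_closedBall isClosed_singleton
  have hZcomp : IsCompact Z := (isCompact_closedBall (0:ℂ) 1).of_isClosed_subset hZclosed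
    (fun z hz => hz.1)
  have hz0Z : z0 ∈ Z := ⟨Metric.ball_subset_closedBall hz0b, hgz0⟩
  obtain ⟨w0, hw0Z, hw0max⟩ := hZcomp.exists_isMaxOn ⟨z0, hz0Z⟩
    (continuous_norm.continuousOn)
  set r0 : ℝ := ‖w0‖ with hr0def
  have hr0lt : r0 < 1 := by
    rcases lt_or_eq_of_le (by simpa using
      Metric.mem_closedBall.mp hw0Z.1 : ‖w0‖ ≤ 1) with h | h
    · exact h
    · exact absurd hw0Z.2 (hgs w0 (by simp [Metric.mem_sphere, Complex.dist_eq, h]))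
  have hr0nonneg : 0 ≤ r0 := norm_nonneg _
  have hZr0 : ∀ z ∈ Z, ‖z‖ ≤ r0 := fun z hz => hw0max hz
  -- uniform continuity
  have hunif := (isCompact_closedBall (0:ℂ) 1).uniformContinuousOn_of_continuous hgc
  rw [Metric.uniformContinuousOn_iff] at hunif
  obtain ⟨δ, hδpos, hδ⟩ := hunif m hmpos
  -- choose the radius s
  set s : ℝ := max ((1 + r0) / 2) (max (1 - δ / 2) (1 / 2)) with hsdef
  have hspos : 0 < s := lt_of_lt_of_le (by norm_num) ((le_max_right _ _).trans (le_max_right _ _))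
  have hs1 : s < 1 := by
    rw [hsdef]
    apply max_lt
    · linarith
    · apply max_lt <;> linarith
  have hr0s : r0 < s := by
    have : (1 + r0) / 2 ≤ s := le_max_left _ _
    linarith
  have hsδ : 1 - s < δ := by
    have : 1 - δ / 2 ≤ s := (le_max_left _ _).trans (le_max_right _ _)
    linarith
  -- nonvanishing on inner circle
  have hcmem : ∀ θ : ℝ, circleMap 0 s θ ∈ Metric.closedBall (0:ℂ) 1 := by
    intro θ
    simp only [Metric.mem_closedBall, dist_zero_right, norm_circleMap_zero]
    rw [abs_of_pos hspos]; linarith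
  have habs_cm : ∀ θ : ℝ, ‖circleMap 0 s θ‖ = s := by
    intro θ; rw [norm_circleMap_zero, abs_of_pos hspos]
  have hgcm : ∀ θ : ℝ, g (circleMap 0 s θ) ≠ 0 := by
    intro θ h0
    have : circleMap 0 s θ ∈ Z := ⟨hcmem θ, h0⟩
    have := hZr0 _ this
    rw [habs_cm θ] at this
    linarith
  have hgsphs : ∀ z ∈ Metric.sphere (0:ℂ) s, g z ≠ 0 := by
    intro z hz h0
    have hzz : z ∈ Z := ⟨Metric.sphere_subset_closedBall.trans
      (Metric.closedBall_subset_closedBall hs1.le) hz, h0⟩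
    have := hZr0 _ hzz
    rw [Metric.mem_sphere, Complex.dist_eq, sub_zero] at hz
    rw [hz] at this
    linarith
  -- the inner lift
  obtain ⟨F, hFc, hFexp, hFint⟩ := circle_lift hspos hs1 hgd hgcm
  -- argument principle
  obtain ⟨mm, hmm, hmm1⟩ := arg_principle ({z ∈ Metric.closedBall (0:ℂ) s | g z = 0}).ncard
    g s hspos hs1 hgd hgsphs le_rfl
  have hz0s : z0 ∈ Metric.ball (0:ℂ) s := by
    rw [Metric.mem_ball, dist_zero_right]
    exact lt_of_le_of_lt (hZr0 z0 hz0Z) hr0s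
  have hmm1' : 1 ≤ mm := hmm1 ⟨z0, hz0s, hgz0⟩
  -- the boundary lift
  set G : ℝ → ℂ := fun θ => (Real.log (ρ θ) : ℂ) + (A θ : ℂ) * I with hGdef
  have hGc : Continuous G := by
    refine Continuous.add ?_ ((Complex.continuous_ofReal.comp hA).mul continuous_const)
    refine Complex.continuous_ofReal.comp ?_
    refine continuous_iff_continuousAt.mpr fun θ => ?_
    exact (Real.continuousAt_log (hρpos θ).ne').comp hρ.continuousAt
  have hGexp : ∀ θ : ℝ, Complex.exp (G θ) = g (Complex.exp (θ * I)) := by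
    intro θ
    rw [hGdef]
    simp only
    rw [Complex.exp_add]
    have : Complex.exp ((Real.log (ρ θ) : ℂ)) = (ρ θ : ℂ) := by
      rw [← Complex.ofReal_exp, Real.exp_log (hρpos θ)]
    rw [this, hgdef]
    simp only
    rw [hlift θ]
  -- the comparison lift
  set q : ℝ → ℂ := fun θ => g (circleMap 0 s θ) / g (Complex.exp (θ * I)) with hqdef
  have hexpmem : ∀ θ : ℝ, Complex.exp ((θ:ℂ) * I) ∈ Metric.sphere (0:ℂ) 1 := by
    intro θ
    simp [Metric.mem_sphere, Complex.dist_eq, Complex.norm_exp_ofReal_mul_I]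
  have hgexpne : ∀ θ : ℝ, g (Complex.exp ((θ:ℂ) * I)) ≠ 0 := fun θ => hgs _ (hexpmem θ)
  have hclose : ∀ θ : ℝ, ‖g (circleMap 0 s θ) - g (Complex.exp ((θ:ℂ) * I))‖ < m := by
    intro θ
    have hd : dist (circleMap 0 s θ) (Complex.exp ((θ:ℂ) * I)) < δ := by
      rw [Complex.dist_eq]
      have : circleMap 0 s θ - Complex.exp ((θ:ℂ) * I) = ((s:ℂ) - 1) * Complex.exp ((θ:ℂ) * I) := by
        simp [circleMap]; ring
      rw [this, norm_mul, Complex.norm_exp_ofReal_mul_I, mul_one]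
      rw [show (s:ℂ) - 1 = ((s - 1 : ℝ) : ℂ) by push_cast; ring, Complex.norm_real, Real.norm_eq_abs,
        abs_of_neg (by linarith)]
      linarith
    have := hδ (circleMap 0 s θ) (hcmem θ) (Complex.exp ((θ:ℂ) * I))
      (Metric.sphere_subset_closedBall (hexpmem θ)) hd
    rwa [Complex.dist_eq] at this
  have hqre : ∀ θ : ℝ, 0 < (q θ).re := by
    intro θ
    have h1 : ‖q θ - 1‖ < 1 := by
      rw [hqdef]
      simp only
      rw [div_sub_one (hgexpne θ), norm_div]
      rw [div_lt_one (norm_pos_iff.mpr (hgexpne θ))]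
      exact lt_of_lt_of_le (hclose θ) (hmle _ (hexpmem θ))
    have h2 : |(q θ - 1).re| ≤ ‖q θ - 1‖ := Complex.abs_re_le_norm _
    have h3 : (q θ - 1).re = (q θ).re - 1 := by simp
    rw [h3] at h2
    have := abs_le.mp h2
    linarith [this.1]
  have hqne : ∀ θ : ℝ, q θ ≠ 0 := by
    intro θ h0
    have := hqre θ
    rw [h0] at this
    simp at this
  have hqc : Continuous q := by
    rw [hqdef]
    refine Continuous.div ?_ ?_ hgexpne
    · exact (hgc.mono (fun z hz => hz)).comp_continuous (continuous_circleMap 0 s) hcmem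
    · refine (hgc.mono (fun z hz => hz)).comp_continuous ?_
        (fun θ => Metric.sphere_subset_closedBall (hexpmem θ))
      exact Complex.continuous_exp.comp (Complex.continuous_ofReal.mul continuous_const)
  set L : ℝ → ℂ := fun θ => G θ + Complex.log (q θ) with hLdef
  have hLc : Continuous L := by
    refine hGc.add ?_
    refine continuous_iff_continuousAt.mpr fun θ => ?_
    exact (continuousAt_clog (Or.inl (hqre θ))).comp hqc.continuousAt
  have hLexp : ∀ θ : ℝ, Complex.exp (L θ) = g (circleMap 0 s θ) := by
    intro θ
    rw [hLdef]
    simp only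
    rw [Complex.exp_add, hGexp θ, Complex.exp_log (hqne θ), hqdef]
    simp only
    rw [mul_comm, div_mul_cancel₀ _ (hgexpne θ)]
  -- lifts agree up to a constant
  have hdiff : ∀ θ : ℝ, F θ - L θ = F 0 - L 0 :=
    lift_sub_const hFc hLc (fun θ => by rw [hFexp θ, hLexp θ])
  have hkey : F (2 * Real.pi) - F 0 = L (2 * Real.pi) - L 0 := by
    have := hdiff (2 * Real.pi)
    linear_combination this
  -- q is periodic at the endpoints
  have hexp2pi : Complex.exp (((2 * Real.pi : ℝ) : ℂ) * I) = Complex.exp (((0:ℝ):ℂ) * I) := by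
    push_cast
    rw [Complex.exp_two_pi_mul_I]
    simp
  have hcm2pi : circleMap 0 s (2 * Real.pi) = circleMap 0 s 0 := by
    have h2 : ((2 * Real.pi : ℝ):ℂ) * I = 2 * Real.pi * I := by push_cast; ring
    rw [circleMap, circleMap, h2, Complex.exp_two_pi_mul_I]
    norm_num
  have hq2pi : q (2 * Real.pi) = q 0 := by
    rw [hqdef]
    simp only
    rw [hexp2pi, hcm2pi]
  have hL2pi : L (2 * Real.pi) - L 0 = G (2 * Real.pi) - G 0 := by
    rw [hLdef]
    simp only
    rw [hq2pi]
    ring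
  -- conclude
  have hfinal : G (2 * Real.pi) - G 0 = 2 * Real.pi * I * mm := by
    rw [← hL2pi, ← hkey, hFint, hmm]
  have hGim : ∀ θ : ℝ, (G θ).im = A θ := by
    intro θ
    rw [hGdef]
    simp
  have him : A (2 * Real.pi) - A 0 = 2 * Real.pi * mm := by
    have h1 := congrArg Complex.im hfinal
    rw [Complex.sub_im, hGim, hGim] at h1
    rw [h1]
    simp [Complex.mul_im]
  rw [him]
  have : (1 : ℝ) ≤ mm := by exact_mod_cast hmm1'
  nlinarith [Real.pi_pos]
end
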